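/- Van der Corput–type consequence of condition (⊥): if c ∈ L∞(G) bounded by 1 satisfies (⊥), then for every K there exist increasing intervals [L_1,R_1], …, [L_K,R_K] of natural numbers and δ arbitrarily small such that for all j < k and all N ∈ [L_k, R_k], the set S_{δ,L_j,R_j}(c) has density at least 1 − δ in F_N (i.e., |S_{δ,L_j,R_j}(c) ∩ F_N| ≥ (1−δ)|F_N|), and |∂_{F_{(j)}}F_N| < δ|F_N| where F_{(j)} = ⋃_{N=L_j}^{R_j} F_N. -/

import Mathlib

open MeasureTheory Filter Set Topology Pointwise ENNReal

/-- The correlation average `E_{g ∈ F n} c(g) c(ga)`. -/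
noncomputable def corrAvg {G : Type*} [Group G] [MeasurableSpace G]
    (μ : Measure G) (F : ℕ → Set G) (c : G → ℝ) (n : ℕ) (a : G) : ℝ :=
  (μ (F n)).toReal⁻¹ * ∫ g in F n, c g * c (g * a) ∂μ

/-- The set `S_{δ,L,R}(c) = {a : |E_{g ∈ F n} c(g) c(ga)| < δ for all L ≤ n ≤ R}`. -/
noncomputable def Sset {G : Type*} [Group G] [MeasurableSpace G]
    (μ : Measure G) (F : ℕ → Set G) (c : G → ℝ) (δ : ℝ) (L R : ℕ) : Set G :=
  {a : G | ∀ n, L ≤ n → n ≤ R → |corrAvg μ F c n a| < δ}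

/-- If `c ∈ L∞(G)` bounded by 1 satisfies condition (⊥) (w.r.t. a tempered
strong Følner sequence), then for every `K` there are increasing intervals
`[L 0, R 0], …, [L (K-1), R (K-1)]` and arbitrarily small `δ > 0` such that for all
`j < k` and all `N ∈ [L k, R k]`: `S_{δ, L j, R j}(c)` has density at least `1 − δ` in
`F N`, and `|∂_{F_(j)} (F N)| < δ |F N|`, where `F_(j) = ⋃_{m = L j}^{R j} F m`. -/
theorem perp_gives_good_intervals
    {G : Type*} [Group G] [TopologicalSpace G] [IsTopologicalGroup G]
    [LocallyCompactSpace G] [SecondCountableTopology G]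
    [MeasurableSpace G] [BorelSpace G]
    (μ : Measure G) [μ.IsHaarMeasure]
    (F : ℕ → Set G) (hFcomp : ∀ n, IsCompact (F n)) (hFpos : ∀ n, 0 < μ (F n))
    (hstrong : ∀ Kc : Set G, IsCompact Kc →
      Tendsto (fun n => μ ((Kc⁻¹ * F n) ∩ (Kc⁻¹ * (F n)ᶜ)) / μ (F n)) atTop (𝓝 0))
    (C : ℝ≥0∞) (hC : C ≠ ⊤)
    (htemp : ∀ j : ℕ, μ (⋃ i, ⋃ _ : i < j, (F i)⁻¹ * F j) < C * μ (F j))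
    (c : G → ℝ) (hcm : Measurable c) (hc1 : ∀ g, |c g| ≤ 1)
    (hperp : ∀ δ > (0:ℝ), ∃ N₀ : ℕ, ∀ L R : ℕ, N₀ ≤ L → L ≤ R →
      1 - δ < liminf (fun N =>
        (μ (Sset μ F c δ L R ∩ F N)).toReal / (μ (F N)).toReal) atTop)
    (K : ℕ) :
    ∀ δ₀ > (0:ℝ), ∃ δ : ℝ, 0 < δ ∧ δ ≤ δ₀ ∧ ∃ L R : Fin K → ℕ,
      (∀ j, L j ≤ R j) ∧
      (∀ j k : Fin K, j < k → R j < L k) ∧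
      ∀ j k : Fin K, j < k → ∀ N : ℕ, L k ≤ N → N ≤ R k →
        (1 - δ) * (μ (F N)).toReal ≤ (μ (Sset μ F c δ (L j) (R j) ∩ F N)).toReal ∧
        (μ (((⋃ m ∈ Icc (L j) (R j), F m)⁻¹ * F N) ∩
            ((⋃ m ∈ Icc (L j) (R j), F m)⁻¹ * (F N)ᶜ))).toReal
          < δ * (μ (F N)).toReal := by
  intro δ hδ
  refine ⟨δ, hδ, le_rfl, ?_⟩
  have hμfin : ∀ n, μ (F n) ≠ ⊤ := fun n => (hFcomp n).measure_lt_top.ne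
  have hμpos : ∀ n, 0 < (μ (F n)).toReal :=
    fun n => ENNReal.toReal_pos (hFpos n).ne' (hμfin n)
  obtain ⟨N₀, hN₀⟩ := hperp δ hδ
  -- key: for each l ≥ N₀, the two conditions hold for all large N
  have key : ∀ l : ℕ, ∃ T : ℕ, ∀ N, T ≤ N → N₀ ≤ l →
      (1 - δ) * (μ (F N)).toReal ≤ (μ (Sset μ F c δ l l ∩ F N)).toReal ∧
      (μ (((⋃ m ∈ Icc l l, F m)⁻¹ * F N) ∩
          ((⋃ m ∈ Icc l l, F m)⁻¹ * (F N)ᶜ))).toReal < δ * (μ (F N)).toReal := by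
    intro l
    by_cases h : N₀ ≤ l
    · have hlim := hN₀ l l h le_rfl
      have hbdd : IsBoundedUnder (· ≥ ·) atTop
          (fun N => (μ (Sset μ F c δ l l ∩ F N)).toReal / (μ (F N)).toReal) :=
        ⟨0, Filter.eventually_map.2 (Filter.Eventually.of_forall fun N =>
          div_nonneg ENNReal.toReal_nonneg ENNReal.toReal_nonneg)⟩
      have hd := Filter.eventually_lt_of_lt_liminf hlim hbdd
      have hKc : IsCompact (⋃ m ∈ Icc l l, F m) :=
        (Set.finite_Icc l l).isCompact_biUnion (fun m _ => hFcomp m)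
      have hb := (hstrong _ hKc).eventually_lt_const (ENNReal.ofReal_pos.2 hδ)
      obtain ⟨T, hT⟩ := Filter.eventually_atTop.1 (hd.and hb)
      refine ⟨T, fun N hN _ => ?_⟩
      obtain ⟨h1, h2⟩ := hT N hN
      constructor
      · rw [lt_div_iff₀ (hμpos N)] at h1
        exact h1.le
      · rw [ENNReal.div_lt_iff (Or.inl (hFpos N).ne') (Or.inl (hμfin N))] at h2
        have hne : ENNReal.ofReal δ * μ (F N) ≠ ⊤ :=
          ENNReal.mul_ne_top ENNReal.ofReal_ne_top (hμfin N)
        have h3 := (ENNReal.toReal_lt_toReal (h2.trans_le le_top).ne hne).2 h2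
        rwa [ENNReal.toReal_mul, ENNReal.toReal_ofReal hδ.le] at h3
    · exact ⟨0, fun N _ h' => absurd h' h⟩
  choose T hT using key
  -- build the strictly increasing sequence
  set f : ℕ → ℕ := fun k => Nat.rec N₀
    (fun _ prev => max (prev + 1) ((Finset.range (prev + 1)).sup T)) k with hf
  have hfsucc : ∀ k, f (k + 1) = max (f k + 1) ((Finset.range (f k + 1)).sup T) :=
    fun k => rfl
  have hmono : StrictMono f := strictMono_nat_of_lt_succ fun k => by
    rw [hfsucc k]; exact lt_of_lt_of_le (Nat.lt_succ_self _) (le_max_left _ _)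
  have hfN₀ : ∀ k, N₀ ≤ f k := fun k => by
    have : f 0 = N₀ := rfl
    calc N₀ = f 0 := this.symm
    _ ≤ f k := hmono.monotone (Nat.zero_le k)
  have hfT : ∀ j k : ℕ, j < k → T (f j) ≤ f k := by
    intro j k hjk
    have h1 : T (f j) ≤ (Finset.range (f j + 1)).sup T :=
      Finset.le_sup (Finset.mem_range.2 (Nat.lt_succ_self _))
    have h2 : (Finset.range (f j + 1)).sup T ≤ f (j + 1) := by
      rw [hfsucc j]; exact le_max_right _ _
    exact h1.trans (h2.trans (hmono.monotone hjk))
  refine ⟨fun k => f k, fun k => f k, fun j => le_rfl, ?_, ?_⟩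
  · intro j k hjk
    exact hmono (Fin.lt_iff_val_lt_val.1 hjk)
  · intro j k hjk N hLN _
    exact hT (f j) N (le_trans (hfT j k (Fin.lt_iff_val_lt_val.1 hjk)) hLN) (hfN₀ j)
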